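/- A real symmetric 3×3 matrix X (with entries xᵢⱼ = X i j, 1-based, x₂₁ = x₁₂ etc.) has a multiple eigenvalue if and only if the following five cubic forms all vanish at X: (1) x₁₂²x₂₃ − x₁₂x₁₃x₂₂ + x₁₂x₁₃x₃₃ − x₁₃²x₂₃; (2) x₁₂x₂₃x₁₁ − x₁₂x₂₃x₂₂ − x₁₃³ + x₁₃x₂₃² − x₁₃x₁₁x₂₂ + x₁₃x₁₁x₃₃ + x₁₃x₂₂² − x₁₃x₂₂x₃₃; (3) x₁₂x₁₃x₁₁ − x₁₂x₁₃x₂₂ − x₁₃²x₂₃ + x₂₃³ − x₂₃x₁₁² + x₂₃x₁₁x₂₂ + x₂₃x₁₁x₃₃ − x₂₃x₂₂x₃₃; (4) x₁₂²x₁₁ − x₁₂²x₂₂ − x₁₃²x₁₁ + x₁₃²x₃₃ + x₂₃²x₂₂ − x₂₃²x₃₃ − x₁₁²x₂₂ + x₁₁²x₃₃ + x₁₁x₂₂² − x₁₁x₃₃² − x₂₂²x₃₃ + x₂₂x₃₃²; (5) x₁₂³ − x₁₂x₂₃² − x₁₂x₁₁x₂₂ + x₁₂x₁₁x₃₃ +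 x₁₂x₂₂x₃₃ − x₁₂x₃₃² − x₁₃x₂₃x₁₁ + x₁₃x₂₃x₃₃. (These five cubic forms are a defining system for the discriminant surface M in Sym(3).) -/

import Mathlib

open Matrix

open Polynomial in
private lemma cubic_factor (e1 e2 e3 c d : ℝ)
    (h1 : e1 = c + c + d) (h2 : e2 = c*c + (c*d + c*d)) (h3 : e3 = c*c*d) :
    (X:ℝ[X])^3 - C e1 * X^2 + C e2 * X - C e3
      = (X - C c)^2 * (X - C d) := by
  subst h1 h2 h3
  simp only [C_add, C_mul]
  ring

private lemma cubic_double_root (e1 e2 e3 : ℝ)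
    (h : e1^2*e2^2 - 4*e2^3 - 4*e1^3*e3 + 18*e1*e2*e3 - 27*e3^2 = 0) :
    ∃ c d : ℝ, e1 = c + c + d ∧ e2 = c*c + (c*d + c*d) ∧ e3 = c*c*d := by
  by_cases hp : 3*e2 - e1^2 = 0
  · have hq2 : (-2*e1^3 + 9*e1*e2 - 27*e3)^2 = 0 := by
      linear_combination (-27)*h - 4*(3*e2-e1^2)^2*hp
    have hq0 : -2*e1^3 + 9*e1*e2 - 27*e3 = 0 := by
      exact pow_eq_zero_iff two_ne_zero |>.mp hq2
    exact ⟨e1/3, e1/3, by ring, by linear_combination (1/3)*hp,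
      by linear_combination (-1/27)*hq0 + (e1/9)*hp⟩
  · have hq2 : (-2*e1^3 + 9*e1*e2 - 27*e3)^2 = -4*(3*e2 - e1^2)^3 := by
      linear_combination (-27)*h
    set u : ℝ := (-(-2*e1^3 + 9*e1*e2 - 27*e3))/(6*(3*e2 - e1^2)) with hu
    have hu2 : 9*u^2 = e1^2 - 3*e2 := by
      rw [hu]
      have hp' : e2*3 - e1^2 ≠ 0 := fun h0 => hp (by linarith)
      field_simp
      linear_combination 9*hq2
    have hu3 : 54*u^3 = -2*e1^3 + 9*e1*e2 - 27*e3 := by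
      have h6 : 54*u^3 = 6*u*(9*u^2) := by ring
      rw [h6, hu2, hu]
      have hp' : e2*3 - e1^2 ≠ 0 := fun h0 => hp (by linarith)
      field_simp
      ring
    exact ⟨u + e1/3, -2*u + e1/3, by ring, by linear_combination (1/3)*hu2,
      by linear_combination (e1/9)*hu2 + (1/27)*hu3⟩

/-- A real symmetric 3×3 matrix has a multiple eigenvalue iff the five cubic
forms of the minimal defining system for the discriminant surface vanish. -/
theorem discSurface_cubic_equations
    (X : Matrix (Fin 3) (Fin 3) ℝ) (hX : X.IsSymm) :
    (∃ c : ℝ, (Polynomial.X - Polynomial.C c) ^ 2 ∣ X.charpoly) ↔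
      (X 0 1 ^ 2 * X 1 2 - X 0 1 * X 0 2 * X 1 1 + X 0 1 * X 0 2 * X 2 2
          - X 0 2 ^ 2 * X 1 2 = 0 ∧
       X 0 1 * X 1 2 * X 0 0 - X 0 1 * X 1 2 * X 1 1 - X 0 2 ^ 3
          + X 0 2 * X 1 2 ^ 2 - X 0 2 * X 0 0 * X 1 1 + X 0 2 * X 0 0 * X 2 2
          + X 0 2 * X 1 1 ^ 2 - X 0 2 * X 1 1 * X 2 2 = 0 ∧
       X 0 1 * X 0 2 * X 0 0 - X 0 1 * X 0 2 * X 1 1 - X 0 2 ^ 2 * X 1 2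
          + X 1 2 ^ 3 - X 1 2 * X 0 0 ^ 2 + X 1 2 * X 0 0 * X 1 1
          + X 1 2 * X 0 0 * X 2 2 - X 1 2 * X 1 1 * X 2 2 = 0 ∧
       X 0 1 ^ 2 * X 0 0 - X 0 1 ^ 2 * X 1 1 - X 0 2 ^ 2 * X 0 0
          + X 0 2 ^ 2 * X 2 2 + X 1 2 ^ 2 * X 1 1 - X 1 2 ^ 2 * X 2 2
          - X 0 0 ^ 2 * X 1 1 + X 0 0 ^ 2 * X 2 2 + X 0 0 * X 1 1 ^ 2
          - X 0 0 * X 2 2 ^ 2 - X 1 1 ^ 2 * X 2 2 + X 1 1 * X 2 2 ^ 2 = 0 ∧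
       X 0 1 ^ 3 - X 0 1 * X 1 2 ^ 2 - X 0 1 * X 0 0 * X 1 1
          + X 0 1 * X 0 0 * X 2 2 + X 0 1 * X 1 1 * X 2 2 - X 0 1 * X 2 2 ^ 2
          - X 0 2 * X 1 2 * X 0 0 + X 0 2 * X 1 2 * X 2 2 = 0) := by
  have h10 : X 1 0 = X 0 1 := congrFun (congrFun hX 0) 1
  have h20 : X 2 0 = X 0 2 := congrFun (congrFun hX 0) 2
  have h21 : X 2 1 = X 1 2 := congrFun (congrFun hX 1) 2
  have hcp : X.charpoly
      = Polynomial.X^3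
        - Polynomial.C (X 0 0 + X 1 1 + X 2 2) * Polynomial.X^2
        + Polynomial.C (X 0 0 * X 1 1 + X 0 0 * X 2 2 + X 1 1 * X 2 2
            - X 1 2 * X 1 2 - X 0 2 * X 0 2 - X 0 1 * X 0 1) * Polynomial.X
        - Polynomial.C (X 0 0 * X 1 1 * X 2 2
            + (X 1 2 * X 0 2 * X 0 1 + X 1 2 * X 0 2 * X 0 1)
            - X 0 0 * (X 1 2 * X 1 2) - X 1 1 * (X 0 2 * X 0 2)
            - X 2 2 * (X 0 1 * X 0 1)) := by
    rw [Matrix.charpoly, Matrix.det_fin_three]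
    rw [charmatrix_apply_ne X 0 1 (by decide), charmatrix_apply_ne X 0 2 (by decide),
      charmatrix_apply_ne X 1 0 (by decide), charmatrix_apply_ne X 1 2 (by decide),
      charmatrix_apply_ne X 2 0 (by decide), charmatrix_apply_ne X 2 1 (by decide),
      charmatrix_apply_eq, charmatrix_apply_eq, charmatrix_apply_eq]
    simp only [h10, h20, h21, Polynomial.C_add, Polynomial.C_sub, Polynomial.C_mul]
    ring
  constructor
  · rintro ⟨c, q, hq⟩
    have heval0 : X.charpoly.eval c = 0 := by rw [hq]; simp
    have hderiv0 : (Polynomial.derivative X.charpoly).eval c = 0 := by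
      rw [hq]
      simp [Polynomial.derivative_mul, Polynomial.derivative_pow]
    rw [hcp] at heval0 hderiv0
    simp only [Polynomial.derivative_add, Polynomial.derivative_sub,
      Polynomial.derivative_mul, Polynomial.derivative_pow, Polynomial.derivative_X,
      Polynomial.derivative_C, Polynomial.eval_add, Polynomial.eval_sub,
      Polynomial.eval_mul, Polynomial.eval_pow, Polynomial.eval_X,
      Polynomial.eval_C, Polynomial.eval_one, Polynomial.eval_zero,
      Nat.cast_ofNat] at heval0 hderiv0
    norm_num at hderiv0
    set d : ℝ := (X 0 0 + X 1 1 + X 2 2) - (c + c) with hd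
    have he1 : X 0 0 + X 1 1 + X 2 2 = c + c + d := by rw [hd]; ring
    have he2 : X 0 0 * X 1 1 + X 0 0 * X 2 2 + X 1 1 * X 2 2
        - X 1 2 * X 1 2 - X 0 2 * X 0 2 - X 0 1 * X 0 1 = c*c + (c*d + c*d) := by
      rw [hd]; linear_combination hderiv0
    have he3 : X 0 0 * X 1 1 * X 2 2
        + (X 1 2 * X 0 2 * X 0 1 + X 1 2 * X 0 2 * X 0 1)
        - X 0 0 * (X 1 2 * X 1 2) - X 1 1 * (X 0 2 * X 0 2)
        - X 2 2 * (X 0 1 * X 0 1) = c*c*d := by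
      rw [hd]; linear_combination (-1)*heval0 + c*hderiv0
    have hfac : X.charpoly
        = (Polynomial.X - Polynomial.C c)^2 * (Polynomial.X - Polynomial.C d) := by
      rw [hcp]; exact cubic_factor _ _ _ c d he1 he2 he3
    -- Cayley–Hamilton
    have hch0 := Matrix.aeval_self_charpoly X
    rw [hfac] at hch0
    simp only [_root_.map_mul, map_pow, _root_.map_sub, Polynomial.aeval_X,
      Polynomial.aeval_C, Algebra.algebraMap_eq_smul_one] at hch0
    set B : Matrix (Fin 3) (Fin 3) ℝ := X - c • 1 with hB
    set E : Matrix (Fin 3) (Fin 3) ℝ := X - d • 1 with hE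
    have hcomm : E * B = B * E := by
      rw [hB, hE]
      simp only [Matrix.sub_mul, Matrix.mul_sub, Matrix.smul_mul, Matrix.mul_smul,
        Matrix.one_mul, Matrix.mul_one, smul_sub, smul_smul, mul_comm c d]
      abel
    have hch : B * B * E = 0 := by rw [← sq]; exact hch0
    have hD2 : (B * E) * (B * E) = 0 := by
      have ha1 : (B * E) * (B * E) = B * (E * B) * E := by noncomm_ring
      have ha2 : B * (B * E) * E = (B * B * E) * E := by noncomm_ring
      rw [ha1, hcomm, ha2, hch, zero_mul]
    have hXt : Xᵀ = X := hX
    have hDsym : (B * E)ᵀ = B * E := by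
      rw [Matrix.transpose_mul, hB, hE]
      simp only [Matrix.transpose_sub, Matrix.transpose_smul, Matrix.transpose_one, hXt]
      rw [← hB, ← hE]
      exact hcomm
    have hsymE : ∀ i j, (B * E) j i = (B * E) i j := by
      intro i j
      conv_lhs => rw [← hDsym]
      rw [Matrix.transpose_apply]
    have hrows : ∀ i : Fin 3,
        ((B*E) i 0)^2 + ((B*E) i 1)^2 + ((B*E) i 2)^2 = 0 := by
      intro i
      have h0 := congrFun (congrFun hD2 i) i
      rw [Matrix.mul_apply, Fin.sum_univ_three] at h0
      rw [hsymE i 0, hsymE i 1, hsymE i 2] at h0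
      simpa [sq] using h0
    have hent : ∀ i j, (B * E) i j = 0 := by
      intro i j
      have h0 := hrows i
      have n0 := sq_nonneg ((B*E) i 0)
      have n1 := sq_nonneg ((B*E) i 1)
      have n2 := sq_nonneg ((B*E) i 2)
      have z0 : ((B*E) i 0)^2 = 0 := by linarith
      have z1 : ((B*E) i 1)^2 = 0 := by linarith
      have z2 : ((B*E) i 2)^2 = 0 := by linarith
      have e0 := pow_eq_zero_iff two_ne_zero |>.mp z0
      have e1 := pow_eq_zero_iff two_ne_zero |>.mp z1
      have e2 := pow_eq_zero_iff two_ne_zero |>.mp z2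
      fin_cases j <;> assumption
    have hM11 : X 0 0 * X 0 0 + X 0 2 * X 0 2 + X 0 1 * X 0 1 - (c+d) * X 0 0 + c*d = 0 := by
      have h0 := hent 0 0
      rw [hB, hE, Matrix.mul_apply, Fin.sum_univ_three] at h0
      simp [Matrix.sub_apply, Matrix.smul_apply, Matrix.one_apply, h10, h20, h21] at h0
      linear_combination h0
    have hM22 : X 1 1 * X 1 1 + X 1 2 * X 1 2 + X 0 1 * X 0 1 - (c+d) * X 1 1 + c*d = 0 := by
      have h0 := hent 1 1
      rw [hB, hE, Matrix.mul_apply, Fin.sum_univ_three] at h0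
      simp [Matrix.sub_apply, Matrix.smul_apply, Matrix.one_apply, h10, h20, h21] at h0
      linear_combination h0
    have hM33 : X 2 2 * X 2 2 + X 1 2 * X 1 2 + X 0 2 * X 0 2 - (c+d) * X 2 2 + c*d = 0 := by
      have h0 := hent 2 2
      rw [hB, hE, Matrix.mul_apply, Fin.sum_univ_three] at h0
      simp [Matrix.sub_apply, Matrix.smul_apply, Matrix.one_apply, h10, h20, h21] at h0
      linear_combination h0
    have hM12 : X 0 1 * (X 0 0 + X 1 1 - (c+d)) + X 1 2 * X 0 2 = 0 := by
      have h0 := hent 0 1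
      rw [hB, hE, Matrix.mul_apply, Fin.sum_univ_three] at h0
      simp [Matrix.sub_apply, Matrix.smul_apply, Matrix.one_apply, h10, h20, h21] at h0
      linear_combination h0
    have hM13 : X 0 2 * (X 0 0 + X 2 2 - (c+d)) + X 1 2 * X 0 1 = 0 := by
      have h0 := hent 0 2
      rw [hB, hE, Matrix.mul_apply, Fin.sum_univ_three] at h0
      simp [Matrix.sub_apply, Matrix.smul_apply, Matrix.one_apply, h10, h20, h21] at h0
      linear_combination h0
    have hM23 : X 1 2 * (X 1 1 + X 2 2 - (c+d)) + X 0 2 * X 0 1 = 0 := by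
      have h0 := hent 1 2
      rw [hB, hE, Matrix.mul_apply, Fin.sum_univ_three] at h0
      simp [Matrix.sub_apply, Matrix.smul_apply, Matrix.one_apply, h10, h20, h21] at h0
      linear_combination h0
    refine ⟨?_, ?_, ?_, ?_, ?_⟩
    · linear_combination (X 1 2)*hM22 - (X 1 2)*hM33 - (X 1 1 - X 2 2)*hM23
    · linear_combination (-(X 0 2))*hM11 + (X 0 2)*hM22 + (X 0 0 - X 1 1)*hM13
    · linear_combination (-(X 1 2))*hM11 + (X 1 2)*hM22 + (X 0 0 - X 1 1)*hM23
    · linear_combination (X 2 2 - X 1 1)*hM11 + (X 0 0 - X 2 2)*hM22 - (X 0 0 - X 1 1)*hM33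
    · linear_combination (X 0 1)*hM11 - (X 0 1)*hM33 - (X 0 0 - X 2 2)*hM12
  · rintro ⟨h1, h2, h3, h4, h5⟩
    have hdisc : (X 0 0 + X 1 1 + X 2 2)^2
          * (X 0 0 * X 1 1 + X 0 0 * X 2 2 + X 1 1 * X 2 2
            - X 1 2 * X 1 2 - X 0 2 * X 0 2 - X 0 1 * X 0 1)^2
        - 4 * (X 0 0 * X 1 1 + X 0 0 * X 2 2 + X 1 1 * X 2 2
            - X 1 2 * X 1 2 - X 0 2 * X 0 2 - X 0 1 * X 0 1)^3
        - 4 * (X 0 0 + X 1 1 + X 2 2)^3 * (X 0 0 * X 1 1 * X 2 2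
            + (X 1 2 * X 0 2 * X 0 1 + X 1 2 * X 0 2 * X 0 1)
            - X 0 0 * (X 1 2 * X 1 2) - X 1 1 * (X 0 2 * X 0 2)
            - X 2 2 * (X 0 1 * X 0 1))
        + 18 * (X 0 0 + X 1 1 + X 2 2)
          * (X 0 0 * X 1 1 + X 0 0 * X 2 2 + X 1 1 * X 2 2
            - X 1 2 * X 1 2 - X 0 2 * X 0 2 - X 0 1 * X 0 1)
          * (X 0 0 * X 1 1 * X 2 2
            + (X 1 2 * X 0 2 * X 0 1 + X 1 2 * X 0 2 * X 0 1)
            - X 0 0 * (X 1 2 * X 1 2) - X 1 1 * (X 0 2 * X 0 2)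
            - X 2 2 * (X 0 1 * X 0 1))
        - 27 * (X 0 0 * X 1 1 * X 2 2
            + (X 1 2 * X 0 2 * X 0 1 + X 1 2 * X 0 2 * X 0 1)
            - X 0 0 * (X 1 2 * X 1 2) - X 1 1 * (X 0 2 * X 0 2)
            - X 2 2 * (X 0 1 * X 0 1))^2 = 0 := by
      linear_combination
        (40*(X 1 2)*(X 0 1)^2 - 44*(X 1 2)*(X 0 2)^2 + 12*(X 1 2)^3
          + 28*(X 2 2)*(X 0 2)*(X 0 1) - 4*(X 2 2)^2*(X 1 2)
          - 32*(X 1 1)*(X 0 2)*(X 0 1) - 24*(X 1 1)*(X 2 2)*(X 1 2)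
          + 11*(X 1 1)^2*(X 1 2) + 4*(X 0 0)*(X 0 2)*(X 0 1)
          + 32*(X 0 0)*(X 2 2)*(X 1 2) + 2*(X 0 0)*(X 1 1)*(X 1 2)
          - 17*(X 0 0)^2*(X 1 2)) * h1
        + (-12*(X 0 2)*(X 0 1)^2 - 4*(X 0 2)^3 + 28*(X 1 2)^2*(X 0 2)
          - 21*(X 2 2)*(X 1 2)*(X 0 1) - (X 2 2)^2*(X 0 2)
          + 8*(X 1 1)*(X 1 2)*(X 0 1) - 4*(X 1 1)*(X 2 2)*(X 0 2)
          + 4*(X 1 1)^2*(X 0 2) + 13*(X 0 0)*(X 1 2)*(X 0 1)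
          + 6*(X 0 0)*(X 2 2)*(X 0 2) - 4*(X 0 0)*(X 1 1)*(X 0 2)
          - (X 0 0)^2*(X 0 2)) * h2
        + (-24*(X 1 2)*(X 0 1)^2 + 4*(X 1 2)^3 - 3*(X 2 2)*(X 0 2)*(X 0 1)
          + (X 2 2)^2*(X 1 2) - 6*(X 1 1)*(X 2 2)*(X 1 2) + (X 1 1)^2*(X 1 2)
          + 3*(X 0 0)*(X 0 2)*(X 0 1) + 4*(X 0 0)*(X 2 2)*(X 1 2)
          + 4*(X 0 0)*(X 1 1)*(X 1 2) - 4*(X 0 0)^2*(X 1 2)) * h3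
        + (4*(X 2 2)*(X 0 1)^2 - 5*(X 1 1)*(X 0 1)^2 + (X 1 1)*(X 2 2)^2
          - (X 1 1)^2*(X 2 2) + (X 0 0)*(X 0 1)^2 - (X 0 0)*(X 2 2)^2
          + (X 0 0)*(X 1 1)^2 + (X 0 0)^2*(X 2 2) - (X 0 0)^2*(X 1 1)) * h4
        + (4*(X 0 1)^3 + 12*(X 0 2)^2*(X 0 1) - 24*(X 1 2)^2*(X 0 1)
          - 4*(X 2 2)^2*(X 0 1) + 8*(X 1 1)*(X 2 2)*(X 0 1)
          - 4*(X 1 1)^2*(X 0 1)) * h5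
    obtain ⟨c, d, he1, he2, he3⟩ := cubic_double_root _ _ _ hdisc
    exact ⟨c, Polynomial.X - Polynomial.C d,
      by rw [hcp]; exact cubic_factor _ _ _ c d he1 he2 he3⟩
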